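/- arXiv:2204.11624 — 7 statements merged into one kernel-verified Lean document; each statement's English description precedes it below -/
import Mathlib

section
/- The set of integer solutions to x² = yz is exactly the set of triples of the form (x, y, z) = (uvw, uv², uw²) for integers u, v, w. -/
theorem x_sq_eq_yz_param (x y z : ℤ) :
    x ^ 2 = y * z ↔ ∃ u v w : ℤ, x = u * v * w ∧ y = u * v ^ 2 ∧ z = u * w ^ 2 := by
  constructor
  · intro h
    rcases eq_or_ne y 0 with hy | hy
    · subst hy
      have hx : x = 0 := by have := h; simp at this; exact this
      exact ⟨z, 0, 1, by simp [hx], by simp, by ring⟩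
    rcases eq_or_ne z 0 with hz | hz
    · subst hz
      have hx : x = 0 := by have := h; simp at this; exact this
      exact ⟨y, 1, 0, by simp [hx], by ring, by simp⟩
    set d : ℤ := (Int.gcd y z : ℤ) with hd
    have hdpos : 0 < Int.gcd y z := Int.gcd_pos_of_ne_zero_left z hy
    have hd0 : d ≠ 0 := by positivity
    have hdy : d ∣ y := Int.gcd_dvd_left y z
    have hdz : d ∣ z := Int.gcd_dvd_right y z
    obtain ⟨a, ha⟩ := hdy
    obtain ⟨b, hb⟩ := hdz
    have hcop : IsCoprime a b := by
      rw [Int.isCoprime_iff_gcd_eq_one]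
      have := Int.gcd_div_gcd_div_gcd hdpos
      rwa [← hd, ha, hb, Int.mul_ediv_cancel_left _ hd0,
        Int.mul_ediv_cancel_left _ hd0] at this
    have hdx : d ∣ x := by
      refine (Int.pow_dvd_pow_iff two_ne_zero).mp ?_
      rw [h, ha, hb]; exact ⟨a * b, by ring⟩
    obtain ⟨c, hc⟩ := hdx
    have hab : a * b = c ^ 2 := by
      have : d ^ 2 * (a * b) = d ^ 2 * c ^ 2 := by
        have h' := h; rw [ha, hb, hc] at h'; linear_combination -h'
      exact mul_left_cancel₀ (pow_ne_zero 2 hd0) this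
    have ha0 : a ≠ 0 := fun h0 => hy (by rw [ha, h0, mul_zero])
    have hb0 : b ≠ 0 := fun h0 => hz (by rw [hb, h0, mul_zero])
    obtain ⟨v, hv⟩ := Int.sq_of_isCoprime hcop hab
    obtain ⟨w, hw⟩ := Int.sq_of_isCoprime hcop.symm (by rw [mul_comm]; exact hab)
    rcases hv with hv | hv <;> rcases hw with hw | hw
    · -- a = v², b = w²
      have hcvw : c ^ 2 = (v * w) ^ 2 := by rw [← hab, hv, hw]; ring
      rcases sq_eq_sq_iff_eq_or_eq_neg.mp hcvw with hcv | hcv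
      · exact ⟨d, v, w, by rw [hc, hcv]; ring, by rw [ha, hv], by rw [hb, hw]⟩
      · exact ⟨d, v, -w, by rw [hc, hcv]; ring, by rw [ha, hv], by rw [hb, hw]; ring⟩
    · -- a = v², b = -w²: impossible
      exfalso
      have : c ^ 2 = -(v * w) ^ 2 := by rw [← hab, hv, hw]; ring
      have h1 : (0:ℤ) ≤ c ^ 2 := sq_nonneg c
      have h2 : c ^ 2 ≤ 0 := this ▸ neg_nonpos.mpr (sq_nonneg _)
      have : c ^ 2 = 0 := le_antisymm h2 h1
      have hvw : v * w = 0 := by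
        have := this.symm.trans (by rw [← hab, hv, hw]; ring : c ^ 2 = -(v*w)^2)
        nlinarith [sq_nonneg (v*w)]
      rcases mul_eq_zero.mp hvw with h' | h'
      · exact ha0 (by rw [hv, h']; ring)
      · exact hb0 (by rw [hw, h']; ring)
    · exfalso
      have hvw : v * w = 0 := by nlinarith [sq_nonneg c, sq_nonneg (v*w)]
      rcases mul_eq_zero.mp hvw with h' | h'
      · exact ha0 (by rw [hv, h']; ring)
      · exact hb0 (by rw [hw, h']; ring)
    · -- a = -v², b = -w²
      have hcvw : c ^ 2 = (v * w) ^ 2 := by rw [← hab, hv, hw]; ring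
      rcases sq_eq_sq_iff_eq_or_eq_neg.mp hcvw with hcv | hcv
      · exact ⟨-d, v, -w, by rw [hc, hcv]; ring, by rw [ha, hv]; ring, by rw [hb, hw]; ring⟩
      · exact ⟨-d, v, w, by rw [hc, hcv]; ring, by rw [ha, hv]; ring, by rw [hb, hw]; ring⟩
  · rintro ⟨u, v, w, rfl, rfl, rfl⟩
    ring
end

section
/- The set of integer solutions to xy = zt is exactly the set of quadruples of the form (x, y, z, t) = (u₁u₂, u₃u₄, u₁u₃, u₂u₄) for integers u₁, u₂, u₃, u₄. -/
theorem xy_eq_zt_param (x y z t : ℤ) :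
    x * y = z * t ↔
      ∃ u₁ u₂ u₃ u₄ : ℤ, x = u₁ * u₂ ∧ y = u₃ * u₄ ∧ z = u₁ * u₃ ∧ t = u₂ * u₄ := by
  constructor
  · intro h
    by_cases hx : x = 0
    · subst hx
      rcases mul_eq_zero.mp (show z * t = 0 by linarith) with hz | ht
      · exact ⟨0, t, y, 1, by ring, by ring, by simp [hz], by ring⟩
      · exact ⟨z, 0, 1, y, by ring, by ring, by ring, by simp [ht]⟩
    · set g : ℤ := (Int.gcd x z : ℤ) with hg
      have hgx : g ∣ x := Int.gcd_dvd_left x z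
      have hgz : g ∣ z := Int.gcd_dvd_right x z
      have hg0 : g ≠ 0 := by
        simp only [hg, ne_eq, Int.natCast_eq_zero, Int.gcd_eq_zero_iff]
        tauto
      obtain ⟨u₂, hu₂⟩ := hgx
      obtain ⟨u₃, hu₃⟩ := hgz
      have hcop : IsCoprime u₂ u₃ := by
        have hgpos : 0 < Int.gcd x z := by
          rcases Nat.eq_zero_or_pos (Int.gcd x z) with h0 | h0
          · exact absurd ((Int.gcd_eq_zero_iff).mp h0).1 hx
          · exact h0
        have h1 := Int.gcd_div_gcd_div_gcd hgpos
        have e2 : x / g = u₂ := by rw [hu₂]; exact Int.mul_ediv_cancel_left _ hg0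
        have e3 : z / g = u₃ := by rw [hu₃]; exact Int.mul_ediv_cancel_left _ hg0
        rw [Int.isCoprime_iff_gcd_eq_one, ← e2, ← e3]
        exact h1
      have hu₂0 : u₂ ≠ 0 := by rintro rfl; simp at hu₂; exact hx hu₂
      have key : u₂ * y = u₃ * t := by
        have : g * (u₂ * y) = g * (u₃ * t) := by
          rw [hu₂, hu₃] at h; ring_nf; ring_nf at h; linarith [h]
        exact mul_left_cancel₀ hg0 this
      have hdvd : u₂ ∣ t := by
        have : u₂ ∣ u₃ * t := ⟨y, key.symm⟩
        exact (IsCoprime.dvd_of_dvd_mul_left hcop this)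
      obtain ⟨u₄, hu₄⟩ := hdvd
      refine ⟨g, u₂, u₃, u₄, hu₂, ?_, hu₃, hu₄⟩
      have : u₂ * y = u₂ * (u₃ * u₄) := by rw [key, hu₄]; ring
      exact mul_left_cancel₀ hu₂0 this
  · rintro ⟨a, b, c, d, rfl, rfl, rfl, rfl⟩; ring
end

section
/- The equation y(x² - y) = z² + 1 has no integer solutions. -/
/-- Every odd divisor of `n^2+1` is `1` mod `4`. -/
lemma odd_dvd_sq_add_one_mod_four :
    ∀ d : ℕ, ∀ n : ℕ, d ∣ n ^ 2 + 1 → d % 2 = 1 → d % 4 = 1 := by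
  intro d
  induction d using Nat.strong_induction_on with
  | _ d ih =>
    intro n hdvd hodd
    rcases eq_or_ne d 1 with rfl | hd1
    · rfl
    · obtain ⟨p, hp, hpd⟩ := Nat.exists_prime_and_dvd hd1
      have hpn : p ∣ n ^ 2 + 1 := hpd.trans hdvd
      have hp2 : p ≠ 2 := by
        rintro rfl
        obtain ⟨k, rfl⟩ := hpd
        omega
      have hpodd : p % 2 = 1 := Nat.odd_iff.mp (hp.odd_of_ne_two hp2)
      haveI : Fact p.Prime := ⟨hp⟩
      have hsq : ((n : ZMod p)) ^ 2 = -1 := by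
        have h0 : ((n ^ 2 + 1 : ℕ) : ZMod p) = 0 :=
          (ZMod.natCast_eq_zero_iff _ _).mpr hpn
        push_cast at h0
        linear_combination h0
      have hp4 : p % 4 = 1 := by
        have h3 : p % 4 ≠ 3 := ZMod.exists_sq_eq_neg_one_iff.mp
          ⟨(n : ZMod p), by rw [← hsq]; ring⟩
        omega
      -- factor out p
      obtain ⟨e, he⟩ := hpd
      have hdpos : 0 < d := by omega
      have hppos : 1 < p := hp.one_lt
      have hepos : 0 < e := by
        rcases Nat.eq_zero_or_pos e with rfl | h
        · omega
        · exact h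
      have helt : e < d := by
        rw [he]
        calc e = 1 * e := (one_mul e).symm
        _ < p * e := (Nat.mul_lt_mul_right hepos).mpr hppos
      have hedvd : e ∣ n ^ 2 + 1 := (Dvd.intro_left p he.symm).trans hdvd
      have heodd : e % 2 = 1 := by
        rcases Nat.mod_two_eq_zero_or_one e with h | h
        · exfalso
          obtain ⟨k, rfl⟩ : 2 ∣ e := by omega
          have : d = 2 * (p * k) := by rw [he]; ring
          omega
        · exact h
      have he4 : e % 4 = 1 := ih e helt n hedvd heodd
      have : d % 4 = p % 4 * (e % 4) % 4 := by rw [he, Nat.mul_mod]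
      rw [this, hp4, he4]

/-- Every positive divisor of `n^2+1` is `1` or `2` mod `4`. -/
lemma dvd_sq_add_one_mod_four (n d : ℕ) (h : d ∣ n ^ 2 + 1) (_hd : 0 < d) :
    d % 4 = 1 ∨ d % 4 = 2 := by
  rcases Nat.mod_two_eq_zero_or_one d with he | ho
  · right
    -- 4 does not divide n^2+1
    have h4 : ¬ (4 ∣ n ^ 2 + 1) := by
      intro hcon
      obtain ⟨k, hk⟩ := hcon
      rcases Nat.even_or_odd n with ⟨m, rfl⟩ | ⟨m, rfl⟩
      · have : (m + m) ^ 2 = 4 * (m * m) := by ring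
        omega
      · have : (2 * m + 1) ^ 2 = 4 * (m * m + m) + 1 := by ring
        omega
    have : ¬ (4 ∣ d) := fun hc => h4 (hc.trans h)
    omega
  · left
    exact odd_dvd_sq_add_one_mod_four d n h ho

theorem no_solution_y_xsq_minus_y :
    ¬ ∃ x y z : ℤ, y * (x ^ 2 - y) = z ^ 2 + 1 := by
  rintro ⟨x, y, z, h⟩
  set b : ℤ := x ^ 2 - y with hb
  have hzpos : (0:ℤ) < z ^ 2 + 1 := by positivity
  have hy0 : y ≠ 0 := by rintro rfl; simp at h; omega
  have hypos : 0 < y := by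
    by_contra hc
    push_neg at hc
    have hyneg : y < 0 := lt_of_le_of_ne hc hy0
    have hbpos : 0 < b := by
      have := sq_nonneg x
      simp only [hb]; nlinarith
    nlinarith
  have hbpos : 0 < b := by
    by_contra hc
    push_neg at hc
    nlinarith
  -- pass to naturals
  set A := y.toNat with hA
  set B := b.toNat with hB
  set N := z.natAbs with hN
  set S := x.natAbs with hS
  have hyA : (A : ℤ) = y := Int.toNat_of_nonneg hypos.le
  have hbB : (B : ℤ) = b := Int.toNat_of_nonneg hbpos.le
  have hNz : (N : ℤ) ^ 2 = z ^ 2 := by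
    simp [hN, sq_abs, Int.natAbs_sq, ← Int.abs_eq_natAbs]
  have hSx : (S : ℤ) ^ 2 = x ^ 2 := by
    simp [hS, sq_abs, Int.natAbs_sq, ← Int.abs_eq_natAbs]
  have hmul : A * B = N ^ 2 + 1 := by
    have : (A : ℤ) * B = (N : ℤ) ^ 2 + 1 := by rw [hyA, hbB, hNz]; exact h
    exact_mod_cast this
  have hsum : A + B = S ^ 2 := by
    have : (A : ℤ) + B = (S : ℤ) ^ 2 := by rw [hyA, hbB, hSx, hb]; ring
    exact_mod_cast this
  have hApos : 0 < A := by omega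
  have hBpos : 0 < B := by omega
  have hA4 : A % 4 = 1 ∨ A % 4 = 2 :=
    dvd_sq_add_one_mod_four N A ⟨B, hmul.symm⟩ hApos
  have hB4 : B % 4 = 1 ∨ B % 4 = 2 :=
    dvd_sq_add_one_mod_four N B ⟨A, by rw [← hmul]; ring⟩ hBpos
  -- not both even
  have hnot : ¬ (A % 4 = 2 ∧ B % 4 = 2) := by
    rintro ⟨hA2, hB2⟩
    have : 4 ∣ A * B := by
      obtain ⟨a', ha'⟩ : 2 ∣ A := by omega
      obtain ⟨b', hb'⟩ : 2 ∣ B := by omega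
      exact ⟨a' * b', by rw [ha', hb']; ring⟩
    rw [hmul] at this
    rcases Nat.even_or_odd N with ⟨m, hm⟩ | ⟨m, hm⟩
    · have : N ^ 2 = 4 * (m * m) := by rw [hm]; ring
      omega
    · have : N ^ 2 = 4 * (m * m + m) + 1 := by rw [hm]; ring
      omega
  -- squares are 0 or 1 mod 4
  have hS4 : S ^ 2 % 4 = 0 ∨ S ^ 2 % 4 = 1 := by
    rcases Nat.even_or_odd S with ⟨m, hm⟩ | ⟨m, hm⟩
    · have : S ^ 2 = 4 * (m * m) := by rw [hm]; ring
      omega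
    · have : S ^ 2 = 4 * (m * m + m) + 1 := by rw [hm]; ring
      omega
  omega
end

section
/- The only integer solutions to x² + y² + xyz - 2 = 0 are (x, y, z) = (±1, ±1, 0), i.e., the four solutions (1,1,0), (1,-1,0), (-1,1,0), (-1,-1,0). -/
lemma vj_base (x y z : ℤ) (hx : x.natAbs ≤ 1)
    (heq : x ^ 2 + y ^ 2 + x * y * z - 2 = 0) :
    (x = 1 ∨ x = -1) ∧ (y = 1 ∨ y = -1) ∧ z = 0 := by
  have hx3 : x = -1 ∨ x = 0 ∨ x = 1 := by omega
  rcases hx3 with rfl | rfl | rfl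
  · have h : y * (y - z) = 1 := by linear_combination heq
    rcases Int.mul_eq_one_iff_eq_one_or_neg_one.mp h with ⟨h1, h2⟩ | ⟨h1, h2⟩
    · exact ⟨Or.inr rfl, Or.inl h1, by omega⟩
    · exact ⟨Or.inr rfl, Or.inr h1, by omega⟩
  · exfalso
    have h : y ^ 2 = 2 := by linarith
    have h1 : y ≤ 1 := by nlinarith [sq_nonneg (y - 1)]
    have h2 : -1 ≤ y := by nlinarith [sq_nonneg (y + 1)]
    interval_cases y <;> omega
  · have h : y * (y + z) = 1 := by linear_combination heq
    rcases Int.mul_eq_one_iff_eq_one_or_neg_one.mp h with ⟨h1, h2⟩ | ⟨h1, h2⟩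
    · exact ⟨Or.inl rfl, Or.inl h1, by omega⟩
    · exact ⟨Or.inl rfl, Or.inr h1, by omega⟩

lemma vj_aux : ∀ n : ℕ, ∀ x y z : ℤ, x.natAbs + y.natAbs = n →
    x ^ 2 + y ^ 2 + x * y * z - 2 = 0 →
    (x = 1 ∨ x = -1) ∧ (y = 1 ∨ y = -1) ∧ z = 0 := by
  intro n
  induction n using Nat.strong_induction_on with
  | _ n ih =>
  intro x y z hn heq
  by_cases hx1 : x.natAbs ≤ 1
  · exact vj_base x y z hx1 heq
  by_cases hy1 : y.natAbs ≤ 1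
  · have heq' : y ^ 2 + x ^ 2 + y * x * z - 2 = 0 := by linear_combination heq
    obtain ⟨h1, h2, h3⟩ := vj_base y x z hy1 heq'
    exact ⟨h2, h1, h3⟩
  push_neg at hx1 hy1
  exfalso
  have hxa : (2 : ℤ) ≤ x.natAbs := by exact_mod_cast hx1
  have hya : (2 : ℤ) ≤ y.natAbs := by exact_mod_cast hy1
  have hxx : (x.natAbs : ℤ) * x.natAbs = x * x := Int.natAbs_mul_self' x
  have hyy : (y.natAbs : ℤ) * y.natAbs = y * y := Int.natAbs_mul_self' y
  by_cases hcmp : y.natAbs ≤ x.natAbs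
  · -- jump x
    set x' := -y * z - x with hx'
    have heq2 : x' ^ 2 + y ^ 2 + x' * y * z - 2 = 0 := by
      rw [hx']; linear_combination heq
    have hprod : x' * x = y ^ 2 - 2 := by rw [hx']; linear_combination -heq
    have hprodabs : (x'.natAbs : ℤ) * x.natAbs = y ^ 2 - 2 := by
      have : ((x' * x).natAbs : ℤ) = y ^ 2 - 2 := by
        rw [hprod, Int.natAbs_of_nonneg (by nlinarith)]
      rwa [Int.natAbs_mul, Nat.cast_mul] at this
    have hlt : x'.natAbs < y.natAbs := by
      by_contra hge
      push_neg at hge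
      have : (y.natAbs : ℤ) ≤ x'.natAbs := by exact_mod_cast hge
      have hcmp' : (y.natAbs : ℤ) ≤ x.natAbs := by exact_mod_cast hcmp
      nlinarith
    obtain ⟨_, hy', _⟩ := ih (x'.natAbs + y.natAbs) (by omega) x' y z rfl heq2
    rcases hy' with rfl | rfl <;> simp at hya
  · -- jump y
    push_neg at hcmp
    set y' := -x * z - y with hy'
    have heq2 : x ^ 2 + y' ^ 2 + x * y' * z - 2 = 0 := by
      rw [hy']; linear_combination heq
    have hprod : y' * y = x ^ 2 - 2 := by rw [hy']; linear_combination -heq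
    have hprodabs : (y'.natAbs : ℤ) * y.natAbs = x ^ 2 - 2 := by
      have : ((y' * y).natAbs : ℤ) = x ^ 2 - 2 := by
        rw [hprod, Int.natAbs_of_nonneg (by nlinarith)]
      rwa [Int.natAbs_mul, Nat.cast_mul] at this
    have hlt : y'.natAbs < x.natAbs := by
      by_contra hge
      push_neg at hge
      have : (x.natAbs : ℤ) ≤ y'.natAbs := by exact_mod_cast hge
      have hcmp' : (x.natAbs : ℤ) < y.natAbs := by exact_mod_cast hcmp
      nlinarith
    obtain ⟨hx', _, _⟩ := ih (x.natAbs + y'.natAbs) (by omega) x y' z rfl heq2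
    rcases hx' with rfl | rfl <;> simp at hxa

theorem vieta_jumping_equation (x y z : ℤ) :
    x ^ 2 + y ^ 2 + x * y * z - 2 = 0 ↔
      (x = 1 ∨ x = -1) ∧ (y = 1 ∨ y = -1) ∧ z = 0 := by
  constructor
  · exact vj_aux (x.natAbs + y.natAbs) x y z rfl
  · rintro ⟨hx | hx, hy | hy, hz⟩ <;> subst_vars <;> ring
end

section
/- The equation y² + z² = x³ - 1 has infinitely many integer solutions; in particular, for every integer t, the triple x = 4t⁴ + 8t³ + 12t² + 8t + 3, y = 8t⁵ + 24t⁴ + 40t³ + 38t² + 20t + 5, z = -(8t⁶ + 24t⁵ + 44t⁴ + 44t³ + 28t² + 8t + 1) is a solution. -/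
theorem y_sq_plus_z_sq_eq_x_cube_minus_one :
    (∀ N : ℤ, ∃ x y z : ℤ, y ^ 2 + z ^ 2 = x ^ 3 - 1 ∧ N < |x|) ∧
    (∀ t : ℤ,
      (8 * t ^ 5 + 24 * t ^ 4 + 40 * t ^ 3 + 38 * t ^ 2 + 20 * t + 5) ^ 2 +
        (-(8 * t ^ 6 + 24 * t ^ 5 + 44 * t ^ 4 + 44 * t ^ 3 + 28 * t ^ 2 + 8 * t + 1)) ^ 2 =
        (4 * t ^ 4 + 8 * t ^ 3 + 12 * t ^ 2 + 8 * t + 3) ^ 3 - 1) := by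
  constructor
  · intro N
    set t : ℤ := max N 0 with ht
    have ht0 : 0 ≤ t := le_max_right _ _
    refine ⟨4 * t ^ 4 + 8 * t ^ 3 + 12 * t ^ 2 + 8 * t + 3,
      8 * t ^ 5 + 24 * t ^ 4 + 40 * t ^ 3 + 38 * t ^ 2 + 20 * t + 5,
      -(8 * t ^ 6 + 24 * t ^ 5 + 44 * t ^ 4 + 44 * t ^ 3 + 28 * t ^ 2 + 8 * t + 1), by ring, ?_⟩
    have hx : t < 4 * t ^ 4 + 8 * t ^ 3 + 12 * t ^ 2 + 8 * t + 3 := by nlinarith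
    calc N ≤ t := le_max_left _ _
      _ < 4 * t ^ 4 + 8 * t ^ 3 + 12 * t ^ 2 + 8 * t + 3 := hx
      _ ≤ |4 * t ^ 4 + 8 * t ^ 3 + 12 * t ^ 2 + 8 * t + 3| := le_abs_self _
  · intro t; ring
end

section
/- For every integer t, the identity (3t+1)⁴ - 4(-3t² - 2t - 2)³ - 8 = (12t² + 8t + 25)(3t² + 2t + 1)² holds; consequently, if 12t² + 8t + 25 is a perfect square, then with x = -3t² - 2t - 2, z = 3t + 1, the discriminant z⁴ - 4x³ - 8 is a perfect square and the equation y(z² - y) = x³ + 2 has an integer solution y. -/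
theorem discriminant_identity_h21b (t : ℤ) :
    (3 * t + 1) ^ 4 - 4 * (-3 * t ^ 2 - 2 * t - 2) ^ 3 - 8 =
      (12 * t ^ 2 + 8 * t + 25) * (3 * t ^ 2 + 2 * t + 1) ^ 2 ∧
    (IsSquare (12 * t ^ 2 + 8 * t + 25) →
      IsSquare ((3 * t + 1) ^ 4 - 4 * (-3 * t ^ 2 - 2 * t - 2) ^ 3 - 8) ∧
      ∃ y : ℤ, y * ((3 * t + 1) ^ 2 - y) = (-3 * t ^ 2 - 2 * t - 2) ^ 3 + 2) := by
  refine ⟨by ring, ?_⟩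
  rintro ⟨s, hs⟩
  have hodd : Odd (s * s) := ⟨6 * t ^ 2 + 4 * t + 12, by rw [← hs]; ring⟩
  have hs' : Odd s := (Int.odd_mul.mp hodd).1
  obtain ⟨c, hc⟩ := hs'
  have hc2 : c ^ 2 + c = 3 * t ^ 2 + 2 * t + 6 := by
    have : 12 * t ^ 2 + 8 * t + 25 = (2 * c + 1) * (2 * c + 1) := by rw [hs, hc]
    nlinarith [this]
  constructor
  · exact ⟨s * (3 * t ^ 2 + 2 * t + 1), by linear_combination (3 * t ^ 2 + 2 * t + 1) ^ 2 * hs⟩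
  · exact ⟨c * (3 * t ^ 2 + 2 * t + 1) + 6 * t ^ 2 + 4 * t + 1, by
      linear_combination (-(3 * t ^ 2 + 2 * t + 1) ^ 2) * hc2⟩
end

section
/- For every integer t, the identity ((6t² + 1)(6t))² - 4(6t² + 1)³ + 8 = 4(6t² - 1)²(3t² + 1) holds; consequently, if 3t² + 1 is a perfect square, then with x = 6t² + 1 and z = 6t the equation xyz = x³ + y² - 2 has an integer solution y. -/
theorem discriminant_identity_h21c (t : ℤ) :
    ((6 * t ^ 2 + 1) * (6 * t)) ^ 2 - 4 * (6 * t ^ 2 + 1) ^ 3 + 8 =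
      4 * (6 * t ^ 2 - 1) ^ 2 * (3 * t ^ 2 + 1) ∧
    (IsSquare (3 * t ^ 2 + 1) →
      ∃ y : ℤ, (6 * t ^ 2 + 1) * y * (6 * t) = (6 * t ^ 2 + 1) ^ 3 + y ^ 2 - 2) := by
  constructor
  · ring
  · rintro ⟨s, hs⟩
    exact ⟨18 * t ^ 3 + 3 * t + (6 * t ^ 2 - 1) * s, by linear_combination (6 * t ^ 2 - 1) ^ 2 * hs⟩
end
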